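/- arXiv:2203.12074 — 3 statements merged into one kernel-verified Lean document; each statement's English description precedes it below -/
import Mathlib

section
/- Let R be a 1-strongly convex, continuously differentiable, G-smooth regularizer on a convex compact set X (i.e., ‖∇R(x) − ∇R(x̂)‖_* ≤ G‖x − x̂‖ for all x, x̂ ∈ X). Suppose x̂^(t) = argmax_{x̂∈X} {⟨x̂, u⟩ − (1/η)·D_R(x̂ ‖ x̂^(t−1))} with ‖x̂^(t) − x̂^(t−1)‖ ≤ 2εη. Then for every x̂ ∈ X, ⟨x̂ − x̂^(t), u⟩ ≤ 2εG·Ω_X, where Ω_X is the diameter of X in the norm ‖·‖. -/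
open scoped RealInnerProductSpace

/-- The Bregman divergence `D_R(x ‖ x̂) := R(x) − R(x̂) − ⟨∇R(x̂), x − x̂⟩` of a regularizer
`R` with gradient map `gR`. -/
noncomputable def breg {E : Type*} [NormedAddCommGroup E] [InnerProductSpace ℝ E]
    (R : E → ℝ) (gR : E → E) (x xh : E) : ℝ :=
  R x - R xh - ⟪gR xh, x - xh⟫

/-- Let `R` be a `1`-strongly convex, continuously differentiable,
`G`-smooth regularizer on a convex compact set `X` (`‖∇R(x) − ∇R(x̂)‖_* ≤ G‖x − x̂‖` for all
`x, x̂ ∈ X`). Suppose `x̂t` maximizes `x̂ ↦ ⟨x̂, u⟩ − (1/η)·D_R(x̂ ‖ x̂prev)` over `X` and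
`‖x̂t − x̂prev‖ ≤ 2εη`. Then for every `x̂ ∈ X`, `⟨x̂ − x̂t, u⟩ ≤ 2εG·Ω_X`, where `Ω_X` is the
diameter of `X`. -/
theorem stmt3 {E : Type*} [NormedAddCommGroup E] [InnerProductSpace ℝ E] [CompleteSpace E]
    (X : Set E) (hX : Convex ℝ X) (hXc : IsCompact X) (hXne : X.Nonempty)
    (R : E → ℝ) (gR : E → E)
    (hgrad : ∀ z ∈ X, HasGradientAt R (gR z) z)
    (hsc : ∀ z ∈ X, ∀ z' ∈ X,
      R z' + ⟪gR z', z - z'⟫ + (1 / 2) * ‖z - z'‖ ^ 2 ≤ R z)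
    (G : ℝ) (hG : 0 < G)
    (hsmooth : ∀ z ∈ X, ∀ z' ∈ X, ‖gR z - gR z'‖ ≤ G * ‖z - z'‖)
    (ΩX : ℝ) (hΩX : ∀ z ∈ X, ∀ z' ∈ X, ‖z - z'‖ ≤ ΩX)
    (η ε : ℝ) (hη : 0 < η) (hε : 0 < ε)
    (u : E)
    (xhprev : E) (hxhprev : xhprev ∈ X)
    (xht : E) (hxht : xht ∈ X)
    (hmax : IsMaxOn (fun z => ⟪z, u⟫ - (1 / η) * breg R gR z xhprev) X xht)
    (hclose : ‖xht - xhprev‖ ≤ 2 * ε * η) :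
    ∀ xh ∈ X, ⟪xh - xht, u⟫ ≤ 2 * ε * G * ΩX := by
  intro xh hxh
  -- Derivative of the objective at xht
  have hR : HasFDerivAt R (InnerProductSpace.toDual ℝ E (gR xht) : E →L[ℝ] ℝ) xht :=
    hasGradientAt_iff_hasFDerivAt.mp (hgrad xht hxht)
  have hA : HasFDerivAt (fun z : E => ⟪z, u⟫) (innerSL ℝ u) xht := by
    have h := (innerSL ℝ u).hasFDerivAt (x := xht)
    exact h.congr_of_eventuallyEq (Filter.Eventually.of_forall fun z => by simp [real_inner_comm])
  have hlin : HasFDerivAt (fun z : E => ⟪gR xhprev, z - xhprev⟫)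
      (innerSL ℝ (gR xhprev)) xht := by
    have h := ((innerSL ℝ (gR xhprev)).hasFDerivAt (x := xht)).sub_const ⟪gR xhprev, xhprev⟫
    exact h.congr_of_eventuallyEq
      (Filter.Eventually.of_forall fun z => by simp [inner_sub_right])
  have hbreg : HasFDerivAt (fun z : E => breg R gR z xhprev)
      ((InnerProductSpace.toDual ℝ E (gR xht) : E →L[ℝ] ℝ) - innerSL ℝ (gR xhprev)) xht := by
    have h := (hR.sub_const (R xhprev)).sub hlin
    exact h
  have hf : HasFDerivAt (fun z : E => ⟪z, u⟫ - (1 / η) * breg R gR z xhprev)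
      (innerSL ℝ u - (1 / η) •
        ((InnerProductSpace.toDual ℝ E (gR xht) : E →L[ℝ] ℝ) - innerSL ℝ (gR xhprev))) xht :=
    hA.sub (hbreg.const_mul (1 / η))
  -- First-order optimality condition
  have hy : xh - xht ∈ posTangentConeAt X xht :=
    sub_mem_posTangentConeAt_of_segment_subset (hX.segment_subset hxht hxh)
  have hfo := hmax.localize.hasFDerivWithinAt_nonpos hf.hasFDerivWithinAt hy
  have hfo' : ⟪u, xh - xht⟫ - (1 / η) * (⟪gR xht, xh - xht⟫ - ⟪gR xhprev, xh - xht⟫) ≤ 0 := by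
    simpa [InnerProductSpace.toDual_apply_apply] using hfo
  have key : ⟪xh - xht, u⟫ ≤ (1 / η) * ⟪gR xht - gR xhprev, xh - xht⟫ := by
    rw [real_inner_comm, inner_sub_left]
    linarith
  have hCS : ⟪gR xht - gR xhprev, xh - xht⟫ ≤ ‖gR xht - gR xhprev‖ * ‖xh - xht‖ :=
    real_inner_le_norm _ _
  have h1 : ‖gR xht - gR xhprev‖ ≤ G * (2 * ε * η) :=
    le_trans (hsmooth xht hxht xhprev hxhprev)
      (by nlinarith [norm_nonneg (xht - xhprev)])
  have h2 : ‖xh - xht‖ ≤ ΩX := hΩX xh hxh xht hxht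
  have hΩ0 : (0 : ℝ) ≤ ΩX := le_trans (norm_nonneg _) h2
  have h3 : ⟪gR xht - gR xhprev, xh - xht⟫ ≤ G * (2 * ε * η) * ΩX := by
    have := mul_le_mul h1 h2 (norm_nonneg _) (by positivity)
    nlinarith [norm_nonneg (gR xht - gR xhprev), norm_nonneg (xh - xht)]
  calc ⟪xh - xht, u⟫ ≤ (1 / η) * ⟪gR xht - gR xhprev, xh - xht⟫ := key
    _ ≤ (1 / η) * (G * (2 * ε * η) * ΩX) := by
        apply mul_le_mul_of_nonneg_left h3 (by positivity)
    _ = 2 * ε * G * ΩX := by field_simp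
end

section
/- Consider a bimatrix game (A, B) with strategy sets X, Y and suppose both players employ OMD with learning rate η > 0 and G-smooth 1-strongly convex regularizers. If at some time t we have ‖x^(t) − x̂^(t−1)‖ ≤ εη, ‖x̂^(t) − x^(t)‖ ≤ εη, ‖y^(t) − ŷ^(t−1)‖ ≤ εη and ‖ŷ^(t) − y^(t)‖ ≤ εη, then (x^(t), y^(t)) is a (2εG·max{Ω_X, Ω_Y} + εη)-approximate Nash equilibrium of (A, B). -/
open scoped RealInnerProductSpace

/-- Key auxiliary lemma: if `xh` maximizes `z ↦ ⟪z, v⟫ − (1/η) D_R(z ‖ p)` over a convex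
set `X`, `R` is strongly convex with `G`-Lipschitz gradient map `g` on `X`, and
`‖xh − p‖ ≤ δ`, then `xh` nearly maximizes `⟪·, v⟫` over `X`. -/
lemma aux_step {E : Type*} [NormedAddCommGroup E] [InnerProductSpace ℝ E]
    (X : Set E) (hX : Convex ℝ X)
    (η G Ω δ : ℝ) (hη : 0 < η) (hG : 0 ≤ G) (hδ : 0 ≤ δ)
    (R : E → ℝ) (g : E → E)
    (hsc : ∀ z ∈ X, ∀ z' ∈ X, R z' + ⟪g z', z - z'⟫ + (1 / 2) * ‖z - z'‖ ^ 2 ≤ R z)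
    (hsm : ∀ z ∈ X, ∀ z' ∈ X, ‖g z - g z'‖ ≤ G * ‖z - z'‖)
    (hΩ : ∀ z ∈ X, ∀ z' ∈ X, ‖z - z'‖ ≤ Ω)
    (v p xh : E) (hp : p ∈ X) (hxh : xh ∈ X) (hd : ‖xh - p‖ ≤ δ)
    (hmax : IsMaxOn (fun z => ⟪z, v⟫ - (1 / η) * breg R g z p) X xh) :
    ∀ z ∈ X, ⟪z, v⟫ ≤ ⟪xh, v⟫ + G * δ * Ω / η := by
  intro z hz
  have hΩ0 : 0 ≤ Ω := le_trans (norm_nonneg _) (hΩ xh hxh xh hxh)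
  have hdΩ : ‖z - xh‖ ≤ Ω := hΩ z hz xh hxh
  have hd0 : (0:ℝ) ≤ ‖z - xh‖ := norm_nonneg _
  set d := ‖z - xh‖ with hd_def
  set c := ⟪z - xh, v⟫ with hc_def
  suffices h : c ≤ G * δ * Ω / η by
    have hsplit : ⟪z, v⟫ - ⟪xh, v⟫ = c := by
      rw [hc_def, inner_sub_left]
    linarith
  set K := G * Ω ^ 2 / η with hK
  have hK0 : 0 ≤ K := by positivity
  have key : ∀ l : ℝ, 0 < l → l ≤ 1 → c ≤ G * δ * Ω / η + l * K := by
    intro l hl0 hl1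
    set zl := xh + l • (z - xh) with hzl
    have hzlX : zl ∈ X := by
      have h' := hX hxh hz (by linarith : (0:ℝ) ≤ 1 - l) (le_of_lt hl0) (by ring)
      have : zl = (1 - l) • xh + l • z := by
        rw [hzl]; module
      rw [this]; exact h'
    have hmax' := hmax hzlX
    simp only [Set.mem_setOf_eq] at hmax'
    -- inner product expansion
    have hinner : ⟪zl, v⟫ = ⟪xh, v⟫ + l * c := by
      rw [hzl, inner_add_left, real_inner_smul_left, hc_def]
    -- strong convexity: R zl - R xh ≤ ⟪g zl, zl - xh⟫
    have hsc' := hsc xh hxh zl hzlX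
    have hRz : R zl - R xh ≤ ⟪g zl, zl - xh⟫ := by
      have h1 : ⟪g zl, xh - zl⟫ = -⟪g zl, zl - xh⟫ := by
        rw [← inner_neg_right]; congr 1; abel
      have h2 : (0:ℝ) ≤ (1 / 2) * ‖xh - zl‖ ^ 2 := by positivity
      rw [h1] at hsc'
      linarith
    -- Bregman divergence difference bound
    have hbreg : breg R g zl p - breg R g xh p ≤ l * (G * (δ + l * d) * d) := by
      have hzlxh : zl - xh = l • (z - xh) := by rw [hzl]; abel
      have e1 : breg R g zl p - breg R g xh p
          = R zl - R xh - ⟪g p, zl - xh⟫ := by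
        simp only [breg]
        have : ⟪g p, zl - p⟫ - ⟪g p, xh - p⟫ = ⟪g p, zl - xh⟫ := by
          rw [← inner_sub_right]; congr 1; abel
        linarith
      have e2 : R zl - R xh - ⟪g p, zl - xh⟫ ≤ ⟪g zl - g p, zl - xh⟫ := by
        rw [inner_sub_left]; linarith
      have e3 : ⟪g zl - g p, zl - xh⟫ ≤ ‖g zl - g p‖ * (l * d) := by
        calc ⟪g zl - g p, zl - xh⟫ ≤ ‖g zl - g p‖ * ‖zl - xh‖ := real_inner_le_norm _ _
        _ = ‖g zl - g p‖ * (l * d) := by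
            rw [hzlxh, norm_smul, Real.norm_eq_abs, abs_of_pos hl0]
      have e4 : ‖g zl - g p‖ ≤ G * (δ + l * d) := by
        have hnz : ‖zl - p‖ ≤ δ + l * d := by
          calc ‖zl - p‖ = ‖(xh - p) + l • (z - xh)‖ := by rw [hzl]; congr 1; abel
          _ ≤ ‖xh - p‖ + ‖l • (z - xh)‖ := norm_add_le _ _
          _ = ‖xh - p‖ + l * d := by
              rw [norm_smul, Real.norm_eq_abs, abs_of_pos hl0]
          _ ≤ δ + l * d := by linarith
        calc ‖g zl - g p‖ ≤ G * ‖zl - p‖ := hsm zl hzlX p hp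
        _ ≤ G * (δ + l * d) := by
            apply mul_le_mul_of_nonneg_left hnz hG
      have hld : 0 ≤ l * d := by positivity
      calc breg R g zl p - breg R g xh p ≤ ⟪g zl - g p, zl - xh⟫ := by linarith
      _ ≤ ‖g zl - g p‖ * (l * d) := e3
      _ ≤ G * (δ + l * d) * (l * d) := by
          apply mul_le_mul_of_nonneg_right e4 hld
      _ = l * (G * (δ + l * d) * d) := by ring
    -- combine with optimality
    have hlc : l * c ≤ (1 / η) * (breg R g zl p - breg R g xh p) := by
      rw [hinner] at hmax'
      have := hmax'
      nlinarith [this]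
    have hc_bound : l * c ≤ l * ((1 / η) * (G * (δ + l * d) * d)) := by
      calc l * c ≤ (1 / η) * (breg R g zl p - breg R g xh p) := hlc
      _ ≤ (1 / η) * (l * (G * (δ + l * d) * d)) := by
          apply mul_le_mul_of_nonneg_left hbreg (by positivity)
      _ = l * ((1 / η) * (G * (δ + l * d) * d)) := by ring
    have hc2 : c ≤ (1 / η) * (G * (δ + l * d) * d) :=
      le_of_mul_le_mul_left (by linarith [hc_bound]) hl0
    have hfin : (1 / η) * (G * (δ + l * d) * d) ≤ G * δ * Ω / η + l * K := by
      have h1 : (1 / η) * (G * (δ + l * d) * d)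
          = G * δ * d / η + l * (G * d ^ 2 / η) := by ring
      have h2 : G * δ * d / η ≤ G * δ * Ω / η := by
        gcongr
      have h3 : G * d ^ 2 / η ≤ K := by
        rw [hK]
        gcongr
      nlinarith [mul_le_mul_of_nonneg_left h3 (le_of_lt hl0)]
    linarith
  -- take l → 0
  by_contra hcon
  push_neg at hcon
  set e := (c - G * δ * Ω / η) / 2 with he
  have he0 : 0 < e := by rw [he]; linarith
  set l := min 1 (e / (K + 1)) with hl
  have hl0 : 0 < l := lt_min one_pos (by positivity)
  have hl1 : l ≤ 1 := min_le_left _ _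
  have hlK : l * K ≤ e := by
    have t1 : l * K ≤ (e / (K + 1)) * K :=
      mul_le_mul_of_nonneg_right (min_le_right _ _) hK0
    have t2 : (e / (K + 1)) * K ≤ e := by
      rw [div_mul_eq_mul_div, div_le_iff₀ (by positivity)]
      nlinarith
    linarith
  have hfin := key l hl0 hl1
  linarith

/-- **Approximate fixed points of OMD are approximate Nash equilibria.**
In a bimatrix game `(A, B)` where both players employ OMD with learning rate `η > 0` and
`G`-smooth `1`-strongly convex regularizers, if at some time `t ≥ 1` all four displacements
`‖x⁽ᵗ⁾ − x̂⁽ᵗ⁻¹⁾‖, ‖x̂⁽ᵗ⁾ − x⁽ᵗ⁾‖, ‖y⁽ᵗ⁾ − ŷ⁽ᵗ⁻¹⁾‖, ‖ŷ⁽ᵗ⁾ − y⁽ᵗ⁾‖` are at most `εη`, then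
`(x⁽ᵗ⁾, y⁽ᵗ⁾)` is a `(2εG·max{Ω_X, Ω_Y} + εη)`-approximate Nash equilibrium of `(A, B)`. -/
theorem stmt4 {E F : Type*} [NormedAddCommGroup E] [InnerProductSpace ℝ E] [CompleteSpace E]
    [NormedAddCommGroup F] [InnerProductSpace ℝ F] [CompleteSpace F]
    (X : Set E) (hX : Convex ℝ X) (hXc : IsCompact X) (hXne : X.Nonempty)
    (Y : Set F) (hY : Convex ℝ Y) (hYc : IsCompact Y) (hYne : Y.Nonempty)
    (A : F →L[ℝ] E) (Bt : E →L[ℝ] F)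
    (hAnorm : ∀ w ∈ Y, ‖A w‖ ≤ 1) (hBnorm : ∀ z ∈ X, ‖Bt z‖ ≤ 1)
    (ΩX ΩY : ℝ)
    (hΩX : ∀ z ∈ X, ∀ z' ∈ X, ‖z - z'‖ ≤ ΩX)
    (hΩY : ∀ w ∈ Y, ∀ w' ∈ Y, ‖w - w'‖ ≤ ΩY)
    (η ε G : ℝ) (hη : 0 < η) (hε : 0 < ε) (hG : 0 < G)
    (RX : E → ℝ) (gRX : E → E)
    (hgradX : ∀ z ∈ X, HasGradientAt RX (gRX z) z)
    (hRXsc : ∀ z ∈ X, ∀ z' ∈ X,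
      RX z' + ⟪gRX z', z - z'⟫ + (1 / 2) * ‖z - z'‖ ^ 2 ≤ RX z)
    (hRXsm : ∀ z ∈ X, ∀ z' ∈ X, ‖gRX z - gRX z'‖ ≤ G * ‖z - z'‖)
    (RY : F → ℝ) (gRY : F → F)
    (hgradY : ∀ w ∈ Y, HasGradientAt RY (gRY w) w)
    (hRYsc : ∀ w ∈ Y, ∀ w' ∈ Y,
      RY w' + ⟪gRY w', w - w'⟫ + (1 / 2) * ‖w - w'‖ ^ 2 ≤ RY w)
    (hRYsm : ∀ w ∈ Y, ∀ w' ∈ Y, ‖gRY w - gRY w'‖ ≤ G * ‖w - w'‖)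
    (x xh : ℕ → E) (y yh : ℕ → F)
    (hxmem : ∀ t, x t ∈ X) (hxhmem : ∀ t, xh t ∈ X)
    (hymem : ∀ t, y t ∈ Y) (hyhmem : ∀ t, yh t ∈ Y)
    (hx0 : x 0 = xh 0) (hy0 : y 0 = yh 0)
    (hxstep : ∀ t : ℕ, 1 ≤ t → IsMaxOn
      (fun z => ⟪z, A (y (t - 1))⟫ - (1 / η) * breg RX gRX z (xh (t - 1))) X (x t))
    (hxhstep : ∀ t : ℕ, 1 ≤ t → IsMaxOn
      (fun z => ⟪z, A (y t)⟫ - (1 / η) * breg RX gRX z (xh (t - 1))) X (xh t))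
    (hystep : ∀ t : ℕ, 1 ≤ t → IsMaxOn
      (fun w => ⟪w, Bt (x (t - 1))⟫ - (1 / η) * breg RY gRY w (yh (t - 1))) Y (y t))
    (hyhstep : ∀ t : ℕ, 1 ≤ t → IsMaxOn
      (fun w => ⟪w, Bt (x t)⟫ - (1 / η) * breg RY gRY w (yh (t - 1))) Y (yh t))
    (t : ℕ) (ht : 1 ≤ t)
    (h1 : ‖x t - xh (t - 1)‖ ≤ ε * η) (h2 : ‖xh t - x t‖ ≤ ε * η)
    (h3 : ‖y t - yh (t - 1)‖ ≤ ε * η) (h4 : ‖yh t - y t‖ ≤ ε * η) :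
    (∀ z ∈ X, ⟪z, A (y t)⟫ ≤ ⟪x t, A (y t)⟫ + (2 * ε * G * max ΩX ΩY + ε * η))
    ∧ (∀ w ∈ Y, ⟪w, Bt (x t)⟫ ≤ ⟪y t, Bt (x t)⟫ + (2 * ε * G * max ΩX ΩY + ε * η)) := by
  have hεη : (0:ℝ) ≤ 2 * ε * η := by positivity
  constructor
  · -- x player
    have hdX : ‖xh t - xh (t - 1)‖ ≤ 2 * ε * η := by
      calc ‖xh t - xh (t - 1)‖ = ‖(xh t - x t) + (x t - xh (t - 1))‖ := by
            rw [sub_add_sub_cancel]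
      _ ≤ ‖xh t - x t‖ + ‖x t - xh (t - 1)‖ := norm_add_le _ _
      _ ≤ 2 * ε * η := by linarith
    have H := aux_step X hX η G ΩX (2 * ε * η) hη (le_of_lt hG) hεη RX gRX hRXsc hRXsm hΩX
      (A (y t)) (xh (t - 1)) (xh t) (hxhmem _) (hxhmem _) hdX (hxhstep t ht)
    intro z hz
    have h5 := H z hz
    have hcoef : G * (2 * ε * η) * ΩX / η = 2 * ε * G * ΩX := by
      field_simp
    rw [hcoef] at h5
    have hclose : ⟪xh t, A (y t)⟫ ≤ ⟪x t, A (y t)⟫ + ε * η := by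
      have h6 : ⟪xh t - x t, A (y t)⟫ ≤ ε * η := by
        calc ⟪xh t - x t, A (y t)⟫ ≤ ‖xh t - x t‖ * ‖A (y t)‖ := real_inner_le_norm _ _
        _ ≤ (ε * η) * 1 :=
            mul_le_mul h2 (hAnorm _ (hymem t)) (norm_nonneg _) (by positivity)
        _ = ε * η := by ring
      have : ⟪xh t, A (y t)⟫ - ⟪x t, A (y t)⟫ = ⟪xh t - x t, A (y t)⟫ := by
        rw [inner_sub_left]
      linarith
    have hmaxΩ : 2 * ε * G * ΩX ≤ 2 * ε * G * max ΩX ΩY := by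
      apply mul_le_mul_of_nonneg_left (le_max_left _ _) (by positivity)
    linarith
  · -- y player
    have hdY : ‖yh t - yh (t - 1)‖ ≤ 2 * ε * η := by
      calc ‖yh t - yh (t - 1)‖ = ‖(yh t - y t) + (y t - yh (t - 1))‖ := by
            rw [sub_add_sub_cancel]
      _ ≤ ‖yh t - y t‖ + ‖y t - yh (t - 1)‖ := norm_add_le _ _
      _ ≤ 2 * ε * η := by linarith
    have H := aux_step Y hY η G ΩY (2 * ε * η) hη (le_of_lt hG) hεη RY gRY hRYsc hRYsm hΩY
      (Bt (x t)) (yh (t - 1)) (yh t) (hyhmem _) (hyhmem _) hdY (hyhstep t ht)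
    intro w hw
    have h5 := H w hw
    have hcoef : G * (2 * ε * η) * ΩY / η = 2 * ε * G * ΩY := by
      field_simp
    rw [hcoef] at h5
    have hclose : ⟪yh t, Bt (x t)⟫ ≤ ⟪y t, Bt (x t)⟫ + ε * η := by
      have h6 : ⟪yh t - y t, Bt (x t)⟫ ≤ ε * η := by
        calc ⟪yh t - y t, Bt (x t)⟫ ≤ ‖yh t - y t‖ * ‖Bt (x t)‖ := real_inner_le_norm _ _
        _ ≤ (ε * η) * 1 :=
            mul_le_mul h4 (hBnorm _ (hxmem t)) (norm_nonneg _) (by positivity)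
        _ = ε * η := by ring
      have : ⟪yh t, Bt (x t)⟫ - ⟪y t, Bt (x t)⟫ = ⟪yh t - y t, Bt (x t)⟫ := by
        rw [inner_sub_left]
      linarith
    have hmaxΩ : 2 * ε * G * ΩY ≤ 2 * ε * G * max ΩX ΩY := by
      apply mul_le_mul_of_nonneg_left (le_max_right _ _) (by positivity)
    linarith
end

section
/- Suppose both players in a bimatrix game (A, B) employ OMD with learning rate η > 0 and 1-strongly convex regularizers, with utility of player X at time t given by A·y^(t) and ‖A·y‖_* ≤ 1 for all y ∈ Y. Then for any T ∈ ℕ, Σ_{t=1}^T ‖y^(t) − y^(t−1)‖ ≥ (1/(2η·Ω_X·‖A‖_op)) · Σ_{t=1}^T (‖x^(t) − x̂^(t−1)‖² + ‖x̂^(t) − x^(t)‖²) − 2/‖A‖_op, where Ω_X := max_{x∈X} ‖x‖ and ‖A‖_op := sup_{‖u‖≤1} ‖Au‖_*. -/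
open Finset
open scoped RealInnerProductSpace

/-- Strong convexity lower-bounds the Bregman divergence by half the squared distance. -/
lemma breg_lb {E : Type*} [NormedAddCommGroup E] [InnerProductSpace ℝ E]
    {X : Set E} {R : E → ℝ} {g : E → E}
    (hsc : ∀ z ∈ X, ∀ z' ∈ X, R z' + ⟪g z', z - z'⟫ + (1 / 2) * ‖z - z'‖ ^ 2 ≤ R z)
    {z z' : E} (hz : z ∈ X) (hz' : z' ∈ X) :
    (1 / 2) * ‖z - z'‖ ^ 2 ≤ breg R g z z' := by
  have := hsc z hz z' hz'
  simp only [breg]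
  linarith

/-- The value-based proximal inequality for a maximizer of
`w ↦ ⟪w, u⟫ − (1/η)·D(w‖x̂)` over a convex set, for a `1`-strongly convex regularizer. -/
lemma prox_ineq {E : Type*} [NormedAddCommGroup E] [InnerProductSpace ℝ E]
    {X : Set E} (hX : Convex ℝ X) {R : E → ℝ} {g : E → E}
    (hsc : ∀ z ∈ X, ∀ z' ∈ X, R z' + ⟪g z', z - z'⟫ + (1 / 2) * ‖z - z'‖ ^ 2 ≤ R z)
    {η : ℝ} (hη : 0 < η) (u : E) {xh xo z : E} (hxh : xh ∈ X) (hxo : xo ∈ X) (hz : z ∈ X)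
    (hopt : IsMaxOn (fun w => ⟪w, u⟫ - (1 / η) * breg R g w xh) X xo) :
    η * ⟪z - xo, u⟫ + breg R g xo xh + (1 / 2) * ‖z - xo‖ ^ 2 ≤ breg R g z xh := by
  set n := ‖z - xo‖ ^ 2 with hn
  have hn0 : 0 ≤ n := by positivity
  have key : ∀ l : ℝ, l ∈ Set.Ioo (0:ℝ) 1 →
      (⟪z, u⟫ - (1/η) * breg R g z xh) + (1/η) * ((1 - l)/2) * n
        ≤ ⟪xo, u⟫ - (1/η) * breg R g xo xh := by
    intro l hl
    obtain ⟨hl0, hl1⟩ := hl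
    have hl1' : (0:ℝ) ≤ 1 - l := by linarith
    set w := (1 - l) • xo + l • z with hw
    have hwX : w ∈ X := hX hxo hz hl1' hl0.le (by ring)
    have hzw : z - w = (1 - l) • (z - xo) := by rw [hw]; module
    have hxw : xo - w = (-l) • (z - xo) := by rw [hw]; module
    have h1 := hsc z hz w hwX
    have h2 := hsc xo hxo w hwX
    rw [hzw] at h1
    rw [hxw] at h2
    rw [real_inner_smul_right, norm_smul, Real.norm_eq_abs, abs_of_nonneg hl1'] at h1
    rw [real_inner_smul_right, norm_smul, Real.norm_eq_abs, abs_neg, abs_of_nonneg hl0.le] at h2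
    rw [mul_pow] at h1 h2
    have hRw : R w ≤ (1 - l) * R xo + l * R z - 1/2*(l*(1-l))*n := by
      nlinarith [mul_le_mul_of_nonneg_left h1 hl0.le, mul_le_mul_of_nonneg_left h2 hl1']
    have hfw := hopt hwX
    simp only [Set.mem_setOf_eq, breg] at hfw
    have hwx : w - xh = (1 - l) • (xo - xh) + l • (z - xh) := by rw [hw]; module
    have hiw : ⟪w, u⟫ = (1-l)*⟪xo,u⟫ + l*⟪z,u⟫ := by
      rw [hw, inner_add_left, real_inner_smul_left, real_inner_smul_left]
    have higx : ⟪g xh, w - xh⟫ = (1-l)*⟪g xh, xo - xh⟫ + l*⟪g xh, z - xh⟫ := by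
      rw [hwx, inner_add_right, real_inner_smul_right, real_inner_smul_right]
    rw [hiw, higx] at hfw
    have hη' : (0:ℝ) ≤ 1/η := by positivity
    have hmul := mul_le_mul_of_nonneg_left hRw hη'
    simp only [breg]
    have goal_l : l * ((⟪z, u⟫ - (1/η) * (R z - R xh - ⟪g xh, z - xh⟫)) + (1/η) * ((1 - l)/2) * n)
        ≤ l * (⟪xo, u⟫ - (1/η) * (R xo - R xh - ⟪g xh, xo - xh⟫)) := by
      linarith [hfw, hmul]
    exact le_of_mul_le_mul_left goal_l hl0
  have hfin : (⟪z, u⟫ - (1/η) * breg R g z xh) + (1/η) * (1/2) * n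
      ≤ ⟪xo, u⟫ - (1/η) * breg R g xo xh := by
    have hcont : Continuous (fun l : ℝ =>
        (⟪z, u⟫ - (1/η) * breg R g z xh) + (1/η) * ((1 - l)/2) * n) := by
      continuity
    have htend : Filter.Tendsto (fun l : ℝ =>
        (⟪z, u⟫ - (1/η) * breg R g z xh) + (1/η) * ((1 - l)/2) * n)
        (nhdsWithin 0 (Set.Ioi 0))
        (nhds ((⟪z, u⟫ - (1/η) * breg R g z xh) + (1/η) * ((1 - (0:ℝ))/2) * n)) :=
      Filter.Tendsto.mono_left (hcont.tendsto 0) nhdsWithin_le_nhds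
    rw [show (1/η) * ((1 - (0:ℝ))/2) = (1/η) * (1/2) by norm_num] at htend
    refine le_of_tendsto htend ?_
    filter_upwards [Ioo_mem_nhdsGT_of_mem (Set.mem_Ico.mpr ⟨le_refl 0, one_pos⟩)] with l hl
    exact key l hl
  have h2 := mul_le_mul_of_nonneg_left hfin hη.le
  have e1 : η * ((⟪z, u⟫ - (1/η) * breg R g z xh) + (1/η) * (1/2) * n)
      = η * ⟪z, u⟫ - breg R g z xh + (1/2) * n := by
    field_simp <;> ring
  have e2 : η * (⟪xo, u⟫ - (1/η) * breg R g xo xh) = η * ⟪xo, u⟫ - breg R g xo xh := by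
    field_simp <;> ring
  rw [e1, e2] at h2
  rw [inner_sub_left]
  linarith

/-- **Balancedness.** Suppose both players in a bimatrix game `(A, B)` employ
OMD with learning rate `η > 0` and `1`-strongly convex regularizers, where player `X`'s
utility at time `t` is `A·y⁽ᵗ⁾` with `‖A·y‖ ≤ 1` on `Y`. Then for any `T ∈ ℕ`,
`Σ_{t=1}^T ‖y⁽ᵗ⁾ − y⁽ᵗ⁻¹⁾‖ ≥ (1/(2η·Ω_X·‖A‖)) Σ_{t=1}^T (‖x⁽ᵗ⁾ − x̂⁽ᵗ⁻¹⁾‖² + ‖x̂⁽ᵗ⁾ − x⁽ᵗ⁾‖²)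
− 2/‖A‖`, where `Ω_X = max_{x∈X} ‖x‖` and `‖A‖` is the operator norm. -/
theorem stmt5 {E F : Type*} [NormedAddCommGroup E] [InnerProductSpace ℝ E]
    [NormedAddCommGroup F] [InnerProductSpace ℝ F]
    (X : Set E) (hX : Convex ℝ X) (hXc : IsCompact X) (hXne : X.Nonempty)
    (Y : Set F) (hY : Convex ℝ Y) (hYc : IsCompact Y) (hYne : Y.Nonempty)
    (A : F →L[ℝ] E) (hA : A ≠ 0)
    (hAnorm : ∀ w ∈ Y, ‖A w‖ ≤ 1)
    (ΩX : ℝ) (hΩX : IsGreatest ((fun z => ‖z‖) '' X) ΩX)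
    (η : ℝ) (hη : 0 < η)
    (RX : E → ℝ) (gRX : E → E)
    (hRXsc : ∀ z ∈ X, ∀ z' ∈ X,
      RX z' + ⟪gRX z', z - z'⟫ + (1 / 2) * ‖z - z'‖ ^ 2 ≤ RX z)
    (x xh : ℕ → E) (y : ℕ → F)
    (hxmem : ∀ t, x t ∈ X) (hxhmem : ∀ t, xh t ∈ X) (hymem : ∀ t, y t ∈ Y)
    (hx0 : x 0 = xh 0) (hxinit : IsMinOn RX X (xh 0))
    (hxstep : ∀ t : ℕ, 1 ≤ t → IsMaxOn
      (fun z => ⟪z, A (y (t - 1))⟫ - (1 / η) * breg RX gRX z (xh (t - 1))) X (x t))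
    (hxhstep : ∀ t : ℕ, 1 ≤ t → IsMaxOn
      (fun z => ⟪z, A (y t)⟫ - (1 / η) * breg RX gRX z (xh (t - 1))) X (xh t))
    (T : ℕ) :
    (1 / (2 * η * ΩX * ‖A‖)) * ∑ t ∈ Finset.Icc 1 T,
        (‖x t - xh (t - 1)‖ ^ 2 + ‖xh t - x t‖ ^ 2) - 2 / ‖A‖
      ≤ ∑ t ∈ Finset.Icc 1 T, ‖y t - y (t - 1)‖ := by
  have hA0 : (0:ℝ) < ‖A‖ := norm_pos_iff.mpr hA
  have hΩb : ∀ v ∈ X, ‖v‖ ≤ ΩX := fun v hv => hΩX.2 ⟨v, hv, rfl⟩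
  have hΩ0 : 0 ≤ ΩX := by
    obtain ⟨v, hv, hveq⟩ := hΩX.1
    rw [← hveq]; exact norm_nonneg v
  have hconv : ∀ (f : ℕ → ℝ),
      ∑ t ∈ Finset.Icc 1 T, f t = ∑ i ∈ Finset.range T, f (i+1) := by
    intro f
    induction T with
    | zero => simp
    | succ n ih => rw [Finset.sum_Icc_succ_top (by omega), ih, Finset.sum_range_succ]
  have e3 := hconv (fun t => ‖x t - xh (t - 1)‖ ^ 2 + ‖xh t - x t‖ ^ 2)
  have e4 := hconv (fun t => ‖y t - y (t - 1)‖)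
  simp only [Nat.add_sub_cancel] at e3 e4
  rw [e3, e4]
  set P := ∑ i ∈ Finset.range T, ‖y (i+1) - y i‖ with hP
  set S := ∑ i ∈ Finset.range T, (‖x (i+1) - xh i‖ ^ 2 + ‖xh (i+1) - x (i+1)‖ ^ 2) with hS
  have hP0 : 0 ≤ P := Finset.sum_nonneg fun i _ => norm_nonneg _
  by_cases hΩpos : 0 < ΩX
  · -- main case
    have key : ∀ i : ℕ,
        ‖x (i+1) - xh i‖ ^ 2 + ‖xh (i+1) - x (i+1)‖ ^ 2
          ≤ 2*η*((⟪xh (i+1), A (y (i+1))⟫ - ⟪xh i, A (y i)⟫)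
              + (⟪x (i+1), A (y i)⟫ - ⟪x (i+1), A (y (i+1))⟫)) := by
      intro i
      have hopt1 : IsMaxOn
          (fun z => ⟪z, A (y (i+1))⟫ - (1 / η) * breg RX gRX z (xh i)) X (xh (i+1)) := by
        simpa using hxhstep (i+1) (by omega)
      have hopt2 : IsMaxOn
          (fun z => ⟪z, A (y i)⟫ - (1 / η) * breg RX gRX z (xh i)) X (x (i+1)) := by
        simpa using hxstep (i+1) (by omega)
      have h1 := prox_ineq hX hRXsc hη (A (y (i+1)))
        (hxhmem i) (hxhmem (i+1)) (hxmem (i+1)) hopt1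
      have h2 := prox_ineq hX hRXsc hη (A (y i))
        (hxhmem i) (hxmem (i+1)) (hxhmem i) hopt2
      have h3 : breg RX gRX (xh i) (xh i) = 0 := by simp [breg]
      have h4 : (0:ℝ) ≤ breg RX gRX (xh (i+1)) (xh i) := by
        have := breg_lb hRXsc (hxhmem (i+1)) (hxhmem i)
        nlinarith [norm_nonneg (xh (i+1) - xh i)]
      rw [h3] at h2
      rw [inner_sub_left] at h1 h2
      rw [show ‖x (i+1) - xh (i+1)‖ = ‖xh (i+1) - x (i+1)‖ from norm_sub_rev _ _] at h1
      rw [show ‖xh i - x (i+1)‖ = ‖x (i+1) - xh i‖ from norm_sub_rev _ _] at h2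
      linarith [h1, h2, h4]
    have hsum : S ≤ 2*η*(⟪xh T, A (y T)⟫ - ⟪xh 0, A (y 0)⟫)
        + 2*η*∑ i ∈ Finset.range T, (⟪x (i+1), A (y i)⟫ - ⟪x (i+1), A (y (i+1))⟫) := by
      calc S ≤ ∑ i ∈ Finset.range T, 2*η*((⟪xh (i+1), A (y (i+1))⟫ - ⟪xh i, A (y i)⟫)
                + (⟪x (i+1), A (y i)⟫ - ⟪x (i+1), A (y (i+1))⟫)) :=
            Finset.sum_le_sum fun i _ => key i
        _ = 2*η*∑ i ∈ Finset.range T, (⟪xh (i+1), A (y (i+1))⟫ - ⟪xh i, A (y i)⟫)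
              + 2*η*∑ i ∈ Finset.range T, (⟪x (i+1), A (y i)⟫ - ⟪x (i+1), A (y (i+1))⟫) := by
            rw [← mul_add, ← Finset.sum_add_distrib, Finset.mul_sum]
        _ = 2*η*(⟪xh T, A (y T)⟫ - ⟪xh 0, A (y 0)⟫)
              + 2*η*∑ i ∈ Finset.range T, (⟪x (i+1), A (y i)⟫ - ⟪x (i+1), A (y (i+1))⟫) := by
            rw [Finset.sum_range_sub (fun t => ⟪xh t, A (y t)⟫)]
    have hT : ⟪xh T, A (y T)⟫ ≤ ΩX := by
      calc ⟪xh T, A (y T)⟫ ≤ ‖xh T‖ * ‖A (y T)‖ := real_inner_le_norm _ _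
        _ ≤ ΩX * 1 := mul_le_mul (hΩb _ (hxhmem T)) (hAnorm _ (hymem T)) (norm_nonneg _) hΩ0
        _ = ΩX := mul_one _
    have h0 : -⟪xh 0, A (y 0)⟫ ≤ ΩX := by
      have ha := abs_real_inner_le_norm (xh 0) (A (y 0))
      have hb : ‖xh 0‖ * ‖A (y 0)‖ ≤ ΩX * 1 :=
        mul_le_mul (hΩb _ (hxhmem 0)) (hAnorm _ (hymem 0)) (norm_nonneg _) hΩ0
      have hc := neg_abs_le (⟪xh 0, A (y 0)⟫)
      linarith
    have hterm : ∀ i : ℕ, ⟪x (i+1), A (y i)⟫ - ⟪x (i+1), A (y (i+1))⟫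
        ≤ ΩX*‖A‖*‖y (i+1) - y i‖ := by
      intro i
      have h1 : ⟪x (i+1), A (y i) - A (y (i+1))⟫
          ≤ ‖x (i+1)‖ * ‖A (y i) - A (y (i+1))‖ := real_inner_le_norm _ _
      rw [inner_sub_right] at h1
      have h6 : ‖A (y i) - A (y (i+1))‖ ≤ ‖A‖ * ‖y (i+1) - y i‖ := by
        rw [← map_sub, norm_sub_rev (y (i+1)) (y i)]
        exact A.le_opNorm _
      have h7 := mul_le_mul (hΩb _ (hxmem (i+1))) h6 (norm_nonneg _) hΩ0
      calc ⟪x (i+1), A (y i)⟫ - ⟪x (i+1), A (y (i+1))⟫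
          ≤ ‖x (i+1)‖ * ‖A (y i) - A (y (i+1))‖ := h1
        _ ≤ ΩX * (‖A‖ * ‖y (i+1) - y i‖) := h7
        _ = ΩX*‖A‖*‖y (i+1) - y i‖ := by ring
    have hsum2 : ∑ i ∈ Finset.range T, (⟪x (i+1), A (y i)⟫ - ⟪x (i+1), A (y (i+1))⟫)
        ≤ ΩX*‖A‖*P := by
      calc ∑ i ∈ Finset.range T, (⟪x (i+1), A (y i)⟫ - ⟪x (i+1), A (y (i+1))⟫)
          ≤ ∑ i ∈ Finset.range T, ΩX*‖A‖*‖y (i+1) - y i‖ :=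
            Finset.sum_le_sum fun i _ => hterm i
        _ = ΩX*‖A‖*P := by rw [hP, Finset.mul_sum]
    have hSbound : S ≤ 4*η*ΩX + 2*η*ΩX*‖A‖*P := by
      have hm := mul_le_mul_of_nonneg_left hsum2 (by positivity : (0:ℝ) ≤ 2*η)
      nlinarith [hsum, hT, h0, hm]
    have hc : (0:ℝ) < 2*η*ΩX*‖A‖ := by positivity
    have h1 : 1/(2*η*ΩX*‖A‖) * S ≤ 1/(2*η*ΩX*‖A‖) * (4*η*ΩX + 2*η*ΩX*‖A‖*P) :=
      mul_le_mul_of_nonneg_left hSbound (by positivity)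
    have h2 : 1/(2*η*ΩX*‖A‖) * (4*η*ΩX + 2*η*ΩX*‖A‖*P) = 2/‖A‖ + P := by
      field_simp
      ring
    linarith
  · -- degenerate case ΩX = 0
    have hz : ΩX = 0 := le_antisymm (not_lt.mp hΩpos) hΩ0
    have hzc : 2 * η * ΩX * ‖A‖ = 0 := by rw [hz]; ring
    rw [hzc, div_zero, zero_mul, zero_sub]
    have h2A : 0 ≤ 2/‖A‖ := by positivity
    linarith
end
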